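/- For all π, ρ ∈ NC(n), d_H(π,ρ) ≤ |π ∧ ρ| − |π ∨ ρ| ≤ n − 1. -/

import Mathlib

/-- A partition of `{1,...,n}` (modeled as a setoid on `Fin n`) is non-crossing. -/
def IsNoncrossing {n : ℕ} (s : Setoid (Fin n)) : Prop :=
  ∀ a b c d : Fin n, a < b → b < c → c < d → s.r a c → s.r b d → s.r a b

/-- `NC n`: the set of non-crossing partitions of `{1,...,n}`, ordered by reverse
refinement (the order induced from the refinement order on setoids). -/
abbrev NC (n : ℕ) := {s : Setoid (Fin n) // IsNoncrossing s}

/-- The number of blocks of a partition. -/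
noncomputable def blocks {n : ℕ} (s : Setoid (Fin n)) : ℕ := Nat.card (Quotient s)

/-- The Hasse diagram of `NC n`: vertices are non-crossing partitions, edges join
pairs where one covers the other. -/
def hasse (n : ℕ) : SimpleGraph (NC n) where
  Adj x y := x ⋖ y ∨ y ⋖ x
  symm := ⟨fun _ _ h => h.symm⟩
  loopless := ⟨fun x h => lt_irrefl x (h.elim CovBy.lt CovBy.lt)⟩

section Aux

variable {n : ℕ}

instance : Finite (Setoid (Fin n)) :=
  Finite.of_injective (fun s : Setoid (Fin n) => s.r)
    (fun s t h => by dsimp only at h; exact Setoid.ext fun {a b} => by rw [h])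

/-- The canonical surjection between quotients for comparable setoids. -/
noncomputable def qmap {s t : Setoid (Fin n)} (h : s ≤ t) : Quotient s → Quotient t :=
  Quotient.lift (Quotient.mk t) (fun _ _ hab => Quotient.sound (h hab))

lemma qmap_surjective {s t : Setoid (Fin n)} (h : s ≤ t) : Function.Surjective (qmap h) :=
  fun q => Quotient.inductionOn q (fun a => ⟨Quotient.mk s a, rfl⟩)

lemma blocks_antitone {s t : Setoid (Fin n)} (h : s ≤ t) : blocks t ≤ blocks s :=
  Nat.card_le_card_of_surjective (qmap h) (qmap_surjective h)

lemma blocks_lt_of_lt {s t : Setoid (Fin n)} (h : s < t) : blocks t < blocks s := by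
  refine (blocks_antitone h.le).lt_of_ne fun he => h.not_ge ?_
  have hb : Function.Bijective (qmap h.le) :=
    (qmap_surjective h.le).bijective_of_nat_card_le (le_of_eq he.symm)
  intro a b hab
  have : qmap h.le (Quotient.mk s a) = qmap h.le (Quotient.mk s b) := by
    show Quotient.mk t a = Quotient.mk t b
    exact Quotient.sound hab
  exact Quotient.exact (hb.injective this)

lemma exists_walk_of_le : ∀ (k : ℕ) (π j : NC n), π ≤ j → blocks π.1 - blocks j.1 ≤ k →
    ∃ w : (hasse n).Walk π j, w.length + blocks j.1 ≤ blocks π.1 := by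
  intro k
  induction k with
  | zero =>
    intro π j hle hk
    rcases eq_or_lt_of_le hle with rfl | hlt
    · exact ⟨SimpleGraph.Walk.nil, by simp⟩
    · have := blocks_lt_of_lt (Subtype.coe_lt_coe.2 hlt)
      have := blocks_antitone hle
      omega
  | succ k ih =>
    intro π j hle hk
    rcases eq_or_lt_of_le hle with rfl | hlt
    · exact ⟨SimpleGraph.Walk.nil, by simp⟩
    · obtain ⟨c, hc1, hc2⟩ := exists_covBy_le_of_lt hlt
      have hbc : blocks c.1 < blocks π.1 := blocks_lt_of_lt (Subtype.coe_lt_coe.2 hc1.lt)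
      have hbj : blocks j.1 ≤ blocks c.1 := blocks_antitone hc2
      obtain ⟨w, hw⟩ := ih c j hc2 (by omega)
      exact ⟨SimpleGraph.Walk.cons (show (hasse n).Adj π c from Or.inl hc1) w, by simp only [SimpleGraph.Walk.length_cons]; omega⟩

end Aux

/-- For all `π, ρ ∈ NC(n)`: `d_H(π,ρ) ≤ |π ∧ ρ| - |π ∨ ρ| ≤ n - 1`
(stated additively, where `m` is the meet and `j` the join of `π` and `ρ` in `NC n`). -/
theorem dist_le_meet_join (n : ℕ) (π ρ m j : NC n)
    (hm : IsGLB {π, ρ} m) (hj : IsLUB {π, ρ} j) :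
    (hasse n).dist π ρ + blocks j.1 ≤ blocks m.1 ∧
    blocks m.1 ≤ blocks j.1 + (n - 1) := by
  have hmπ : m ≤ π := hm.1 (by simp)
  have hmρ : m ≤ ρ := hm.1 (by simp)
  have hπj : π ≤ j := hj.1 (by simp)
  have hρj : ρ ≤ j := hj.1 (by simp)
  obtain ⟨w1, hw1⟩ := exists_walk_of_le _ π j hπj le_rfl
  obtain ⟨w2, hw2⟩ := exists_walk_of_le _ ρ j hρj le_rfl
  obtain ⟨w3, hw3⟩ := exists_walk_of_le _ m π hmπ le_rfl
  obtain ⟨w4, hw4⟩ := exists_walk_of_le _ m ρ hmρ le_rfl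
  have d1 : (hasse n).dist π ρ ≤ w1.length + w2.length := by
    have := (hasse n).dist_le (w1.append w2.reverse)
    simpa using this
  have d2 : (hasse n).dist π ρ ≤ w3.length + w4.length := by
    have := (hasse n).dist_le (w3.reverse.append w4)
    simpa [Nat.add_comm] using this
  constructor
  · omega
  · rcases Nat.eq_zero_or_pos n with rfl | hn
    · have h1 : blocks m.1 = 0 := Nat.card_of_isEmpty
      omega
    · have h1 : blocks m.1 ≤ n := by
        have := Nat.card_le_card_of_surjective _ (Quotient.mk_surjective (s := m.1))
        simpa [blocks, Nat.card_eq_fintype_card] using this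
      have h2 : 1 ≤ blocks j.1 := by
        haveI : Nonempty (Quotient j.1) := ⟨Quotient.mk _ ⟨0, hn⟩⟩
        exact Nat.card_pos
      omega
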